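/- Let R = (ℤ/2)[y₁,y₂,y₃,y₄]/I where I is the ideal generated by y₁², y₂·(y₁+y₂), y₃·(y₂+y₃) and y₄·(y₁+y₃+y₄), and write ȳ_j for the image of y_j in R. Then in the tensor product R ⊗_{ℤ/2} R one has (1 ⊗ ȳ₂ + ȳ₂ ⊗ 1) · (1 ⊗ ȳ₃ + ȳ₃ ⊗ 1)^{3} · (1 ⊗ ȳ₄ + ȳ₄ ⊗ 1)^{3} ≠ 0. -/
import Mathlib

open MvPolynomial TensorProduct Finsupp

set_option synthInstance.maxHeartbeats 1000000
set_option maxHeartbeats 4000000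

abbrev P' := MvPolynomial (Fin 4) (ZMod 2)

noncomputable abbrev J' : Ideal P' :=
  Ideal.span {X 0 ^ 2, X 1 * (X 0 + X 1), X 2 * (X 1 + X 2), X 3 * (X 0 + X 2 + X 3)}

noncomputable def e (a b c d : ℕ) : Fin 4 →₀ ℕ :=
  Finsupp.single 0 a + Finsupp.single 1 b + Finsupp.single 2 c + Finsupp.single 3 d

@[simp] lemma e_apply_0 (a b c d : ℕ) : e a b c d 0 = a := by
  simp [e, Finsupp.single_apply]
@[simp] lemma e_apply_1 (a b c d : ℕ) : e a b c d 1 = b := by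
  simp [e, Finsupp.single_apply]
@[simp] lemma e_apply_2 (a b c d : ℕ) : e a b c d 2 = c := by
  simp [e, Finsupp.single_apply]
@[simp] lemma e_apply_3 (a b c d : ℕ) : e a b c d 3 = d := by
  simp [e, Finsupp.single_apply]

lemma e_ext_iff (a b c d : ℕ) (m : Fin 4 →₀ ℕ) :
    m = e a b c d ↔ m 0 = a ∧ m 1 = b ∧ m 2 = c ∧ m 3 = d := by
  constructor
  · rintro rfl; simp
  · rintro ⟨h0, h1, h2, h3⟩
    ext x
    fin_cases x <;> simpa

@[simp] lemma e_sub_0 (a b c d : ℕ) : e a b c d - Finsupp.single 0 1 = e (a-1) b c d := by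
  rw [e_ext_iff]; simp [Finsupp.tsub_apply]
@[simp] lemma e_sub_1 (a b c d : ℕ) : e a b c d - Finsupp.single 1 1 = e a (b-1) c d := by
  rw [e_ext_iff]; simp [Finsupp.tsub_apply]
@[simp] lemma e_sub_2 (a b c d : ℕ) : e a b c d - Finsupp.single 2 1 = e a b (c-1) d := by
  rw [e_ext_iff]; simp [Finsupp.tsub_apply]
@[simp] lemma e_sub_3 (a b c d : ℕ) : e a b c d - Finsupp.single 3 1 = e a b c (d-1) := by
  rw [e_ext_iff]; simp [Finsupp.tsub_apply]

lemma single_eq_e_iff (i : Fin 4) (k a b c d : ℕ) :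
    (Finsupp.single i k = e a b c d) ↔
      (Finsupp.single i k 0 = a ∧ Finsupp.single i k 1 = b ∧
       Finsupp.single i k 2 = c ∧ Finsupp.single i k 3 = d) := e_ext_iff a b c d _

lemma zero_eq_e_iff (a b c d : ℕ) :
    ((0 : Fin 4 →₀ ℕ) = e a b c d) ↔ (0 = a ∧ 0 = b ∧ 0 = c ∧ 0 = d) := by
  rw [e_ext_iff]; simp [eq_comm]

/-- dual of the top class y0y1y2y3, restricted to degree-4 monomials -/
noncomputable def lam : P' →ₗ[ZMod 2] ZMod 2 where
  toFun p :=
    coeff (e 0 0 1 3) p + coeff (e 0 0 3 1) p + coeff (e 0 1 0 3) p + coeff (e 0 1 2 1) p +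
    coeff (e 0 2 0 2) p + coeff (e 0 2 1 1) p + coeff (e 1 0 0 3) p + coeff (e 1 0 1 2) p +
    coeff (e 1 0 2 1) p + coeff (e 1 1 0 2) p + coeff (e 1 1 1 1) p
  map_add' p q := by simp only [coeff_add]; ring
  map_smul' c p := by simp only [coeff_smul, smul_eq_mul, RingHom.id_apply]; ring

lemma lam_apply (p : P') : lam p =
    coeff (e 0 0 1 3) p + coeff (e 0 0 3 1) p + coeff (e 0 1 0 3) p + coeff (e 0 1 2 1) p +
    coeff (e 0 2 0 2) p + coeff (e 0 2 1 1) p + coeff (e 1 0 0 3) p + coeff (e 1 0 1 2) p +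
    coeff (e 1 0 2 1) p + coeff (e 1 1 0 2) p + coeff (e 1 1 1 1) p := rfl

/-- dual of y0y2y3, restricted to degree-3 monomials -/
noncomputable def mu : P' →ₗ[ZMod 2] ZMod 2 where
  toFun p := coeff (e 0 0 1 2) p + coeff (e 1 0 0 2) p + coeff (e 1 0 1 1) p
  map_add' p q := by simp only [coeff_add]; ring
  map_smul' c p := by simp only [coeff_smul, smul_eq_mul, RingHom.id_apply]; ring

lemma mu_apply (p : P') : mu p =
    coeff (e 0 0 1 2) p + coeff (e 1 0 0 2) p + coeff (e 1 0 1 1) p := rfl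

lemma two_zmod2 : (2 : ZMod 2) = 0 := rfl

lemma lam_g1 (p : P') : lam (p * X 0 ^ 2) = 0 := by
  rw [pow_two, ← mul_assoc]
  simp [lam_apply, coeff_mul_X', Finsupp.mem_support_iff]

lemma lam_g2 (p : P') : lam (p * (X 1 * (X 0 + X 1))) = 0 := by
  simp only [mul_add, ← mul_assoc]
  simp only [map_add, lam_apply, coeff_add, coeff_mul_X', Finsupp.mem_support_iff,
    e_apply_0, e_apply_1, e_apply_2, e_apply_3, e_sub_0, e_sub_1, e_sub_2, e_sub_3]
  norm_num
  ring_nf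
  simp [two_zmod2]

lemma lam_g3 (p : P') : lam (p * (X 2 * (X 1 + X 2))) = 0 := by
  simp only [mul_add, ← mul_assoc]
  simp only [map_add, lam_apply, coeff_add, coeff_mul_X', Finsupp.mem_support_iff,
    e_apply_0, e_apply_1, e_apply_2, e_apply_3, e_sub_0, e_sub_1, e_sub_2, e_sub_3]
  norm_num
  ring_nf
  simp [two_zmod2]

lemma lam_g4 (p : P') : lam (p * (X 3 * (X 0 + X 2 + X 3))) = 0 := by
  simp only [mul_add, ← mul_assoc]
  simp only [map_add, lam_apply, coeff_add, coeff_mul_X', Finsupp.mem_support_iff,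
    e_apply_0, e_apply_1, e_apply_2, e_apply_3, e_sub_0, e_sub_1, e_sub_2, e_sub_3]
  norm_num
  ring_nf
  simp [two_zmod2]

lemma mu_g1 (p : P') : mu (p * X 0 ^ 2) = 0 := by
  rw [pow_two, ← mul_assoc]
  simp [mu_apply, coeff_mul_X', Finsupp.mem_support_iff]

lemma mu_g2 (p : P') : mu (p * (X 1 * (X 0 + X 1))) = 0 := by
  simp only [mul_add, ← mul_assoc]
  simp [mu_apply, map_add, coeff_mul_X', Finsupp.mem_support_iff]

lemma mu_g3 (p : P') : mu (p * (X 2 * (X 1 + X 2))) = 0 := by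
  simp only [mul_add, ← mul_assoc]
  simp only [map_add, mu_apply, coeff_add, coeff_mul_X', Finsupp.mem_support_iff,
    e_apply_0, e_apply_1, e_apply_2, e_apply_3, e_sub_0, e_sub_1, e_sub_2, e_sub_3]
  norm_num
  try ring_nf
  try simp [two_zmod2]

lemma mu_g4 (p : P') : mu (p * (X 3 * (X 0 + X 2 + X 3))) = 0 := by
  simp only [mul_add, ← mul_assoc]
  simp only [map_add, mu_apply, coeff_add, coeff_mul_X', Finsupp.mem_support_iff,
    e_apply_0, e_apply_1, e_apply_2, e_apply_3, e_sub_0, e_sub_1, e_sub_2, e_sub_3]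
  norm_num
  ring_nf
  simp [two_zmod2]

lemma lam_ker : J'.restrictScalars (ZMod 2) ≤ LinearMap.ker lam := by
  intro x hx
  rw [Submodule.restrictScalars_mem] at hx
  rw [Ideal.mem_span_insert] at hx
  obtain ⟨a1, z1, hz1, rfl⟩ := hx
  rw [Ideal.mem_span_insert] at hz1
  obtain ⟨a2, z2, hz2, rfl⟩ := hz1
  rw [Ideal.mem_span_insert] at hz2
  obtain ⟨a3, z3, hz3, rfl⟩ := hz2
  rw [Ideal.mem_span_singleton'] at hz3
  obtain ⟨a4, rfl⟩ := hz3
  simp only [LinearMap.mem_ker, map_add]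
  rw [lam_g1, lam_g2, lam_g3, lam_g4]
  ring

lemma mu_ker : J'.restrictScalars (ZMod 2) ≤ LinearMap.ker mu := by
  intro x hx
  rw [Submodule.restrictScalars_mem] at hx
  rw [Ideal.mem_span_insert] at hx
  obtain ⟨a1, z1, hz1, rfl⟩ := hx
  rw [Ideal.mem_span_insert] at hz1
  obtain ⟨a2, z2, hz2, rfl⟩ := hz1
  rw [Ideal.mem_span_insert] at hz2
  obtain ⟨a3, z3, hz3, rfl⟩ := hz2
  rw [Ideal.mem_span_singleton'] at hz3
  obtain ⟨a4, rfl⟩ := hz3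
  simp only [LinearMap.mem_ker, map_add]
  rw [mu_g1, mu_g2, mu_g3, mu_g4]
  ring

noncomputable def lamQ : (P' ⧸ J') →ₗ[ZMod 2] ZMod 2 :=
  (Submodule.liftQ (J'.restrictScalars (ZMod 2)) lam lam_ker).comp
    (Submodule.Quotient.restrictScalarsEquiv (ZMod 2) J').symm.toLinearMap

lemma lamQ_mk (p : P') : lamQ (Ideal.Quotient.mk J' p) = lam p := rfl

noncomputable def muQ : (P' ⧸ J') →ₗ[ZMod 2] ZMod 2 :=
  (Submodule.liftQ (J'.restrictScalars (ZMod 2)) mu mu_ker).comp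
    (Submodule.Quotient.restrictScalarsEquiv (ZMod 2) J').symm.toLinearMap

lemma muQ_mk (p : P') : muQ (Ideal.Quotient.mk J' p) = mu p := rfl

lemma lamQ_one : lamQ 1 = 0 := by
  rw [← map_one (Ideal.Quotient.mk J'), lamQ_mk]
  simp [lam_apply, coeff_one, zero_eq_e_iff]

lemma muQ_one : muQ 1 = 0 := by
  rw [← map_one (Ideal.Quotient.mk J'), muQ_mk]
  simp [mu_apply, coeff_one, zero_eq_e_iff]

lemma tp_mul_add (a b c : (P' ⧸ J') ⊗[ZMod 2] (P' ⧸ J')) : a * (b + c) = a*b + a*c := by ring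
lemma tp_add_mul (a b c : (P' ⧸ J') ⊗[ZMod 2] (P' ⧸ J')) : (a + b) * c = a*c + b*c := by ring

lemma tp_add_self (u : (P' ⧸ J') ⊗[ZMod 2] (P' ⧸ J')) : u + u = 0 := by
  rw [← two_smul (ZMod 2) u, show (2 : ZMod 2) = 0 from rfl, zero_smul]

lemma tp_nsmul3 (u : (P' ⧸ J') ⊗[ZMod 2] (P' ⧸ J')) : (3:ℕ) • u = u := by
  rw [show (3:ℕ) = 2 + 1 from rfl, add_nsmul, two_nsmul, tp_add_self, one_nsmul, zero_add]
lemma tp_zsmul3 (u : (P' ⧸ J') ⊗[ZMod 2] (P' ⧸ J')) : (3:ℤ) • u = u := by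
  rw [show (3:ℤ) = 2 + 1 from rfl, add_zsmul, two_zsmul, tp_add_self, one_zsmul, zero_add]

lemma tp_cube (x : P' ⧸ J') :
    ((1 : P' ⧸ J') ⊗ₜ[ZMod 2] x + x ⊗ₜ[ZMod 2] (1 : P' ⧸ J')) ^ 3
      = 1 ⊗ₜ[ZMod 2] (x*x*x) + x ⊗ₜ[ZMod 2] (x*x) + (x*x) ⊗ₜ[ZMod 2] x + (x*x*x) ⊗ₜ[ZMod 2] 1 := by
  simp only [show ∀ w : ((P' ⧸ J') ⊗[ZMod 2] (P' ⧸ J')), w ^ 3 = w * w * w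
    from fun w => by ring]
  simp only [tp_mul_add, tp_add_mul, Algebra.TensorProduct.tmul_mul_tmul, one_mul, mul_one]
  abel_nf
  simp only [tp_nsmul3, tp_zsmul3]
  try abel

noncomputable def Phi : ((P' ⧸ J') ⊗[ZMod 2] (P' ⧸ J')) →ₗ[ZMod 2] ZMod 2 :=
  (TensorProduct.lid (ZMod 2) (ZMod 2)).toLinearMap.comp (TensorProduct.map lamQ muQ)

lemma Phi_tmul (x y : P' ⧸ J') : Phi (x ⊗ₜ y) = lamQ x * muQ y := by
  simp [Phi, smul_eq_mul]

set_option synthInstance.maxHeartbeats 1000000 in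
set_option maxHeartbeats 1000000 in
theorem stmt_18 (I : Ideal (MvPolynomial (Fin 4) (ZMod 2)))
    (hI : I = Ideal.span {X 0 ^ 2, X 1 * (X 0 + X 1), X 2 * (X 1 + X 2), X 3 * (X 0 + X 2 + X 3)}) :
    ((1 : MvPolynomial (Fin 4) (ZMod 2) ⧸ I) ⊗ₜ[ZMod 2] (Ideal.Quotient.mk I (X 1))
        + (Ideal.Quotient.mk I (X 1)) ⊗ₜ[ZMod 2] 1)
      * ((1 : MvPolynomial (Fin 4) (ZMod 2) ⧸ I) ⊗ₜ[ZMod 2] (Ideal.Quotient.mk I (X 2))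
        + (Ideal.Quotient.mk I (X 2)) ⊗ₜ[ZMod 2] 1) ^ 3
      * ((1 : MvPolynomial (Fin 4) (ZMod 2) ⧸ I) ⊗ₜ[ZMod 2] (Ideal.Quotient.mk I (X 3))
        + (Ideal.Quotient.mk I (X 3)) ⊗ₜ[ZMod 2] 1) ^ 3 ≠ 0 := by
  subst hI
  intro h0
  have key : Phi (((1 : P' ⧸ J') ⊗ₜ[ZMod 2] (Ideal.Quotient.mk J' (X 1))
        + (Ideal.Quotient.mk J' (X 1)) ⊗ₜ[ZMod 2] 1)
      * ((1 : P' ⧸ J') ⊗ₜ[ZMod 2] (Ideal.Quotient.mk J' (X 2))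
        + (Ideal.Quotient.mk J' (X 2)) ⊗ₜ[ZMod 2] 1) ^ 3
      * ((1 : P' ⧸ J') ⊗ₜ[ZMod 2] (Ideal.Quotient.mk J' (X 3))
        + (Ideal.Quotient.mk J' (X 3)) ⊗ₜ[ZMod 2] 1) ^ 3) = 1 := by
    rw [tp_cube (Ideal.Quotient.mk J' (X 2)), tp_cube (Ideal.Quotient.mk J' (X 3))]
    simp only [tp_mul_add, tp_add_mul]
    simp only [Algebra.TensorProduct.tmul_mul_tmul, one_mul, mul_one]
    try simp only [← mul_assoc]
    try simp only [← map_mul (Ideal.Quotient.mk J')]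
    simp only [map_add, Phi_tmul, lamQ_mk, muQ_mk, lamQ_one, muQ_one, zero_mul, mul_zero,
      add_zero, zero_add]
    simp only [lam_apply, mu_apply, coeff_mul_X', Finsupp.mem_support_iff, coeff_X',
      single_eq_e_iff, Finsupp.single_apply,
      e_apply_0, e_apply_1, e_apply_2, e_apply_3, e_sub_0, e_sub_1, e_sub_2, e_sub_3]
    decide
  rw [h0, map_zero] at key
  exact absurd key (by decide)
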